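/- arXiv:2106.05928 — 2 statements merged into one kernel-verified Lean document; each statement's English description precedes it below -/
import Mathlib

section
/- Let C_n be a circuit on n vertices and σ a signature of C_n, with t ≤ χ(C_n). If t ∈ {1,3}, then χ^t_sym(C_n,σ) = 3. If t ∈ {0,2}, then χ^t_sym(C_n,σ) ∈ {2,4}, and χ^t_sym(C_n,σ) = 4 if and only if one of the following holds: (i) (C_n,σ) is a balanced odd circuit; (ii) (C_n,σ) is an unbalanced even circuit and t = 0; (iii) (C_n,σ) is an unbalanced odd circuit and t = 2. -/
/-!
Common framework for symmetric-set colorings of signed graphs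
(C. Cappello, E. Steffen, "Symmetric set coloring of signed graphs").

* A signed graph is a `SimpleGraph V` together with a signature
  `σ : Sym2 V → Bool` (`true` = positive edge, `false` = negative edge);
  only the values of `σ` on edges of `G` matter.
* The canonical symmetric set `S_{2k}^t` with `t` self-inverse elements and
  `k` pairs of non-self-inverse elements is `Sym t k := Fin t ⊕ Fin k × Bool`,
  with negation `symNeg` fixing the `Fin t` part and swapping the Boolean.
-/

namespace SymSet

/-- The canonical symmetric set `S_{2k}^t`. -/
abbrev Sym (t k : ℕ) := Fin t ⊕ Fin k × Bool

/-- Negation on the symmetric set: self-inverse elements are fixed,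
the two elements of each pair are exchanged. -/
def symNeg {t k : ℕ} : Sym t k → Sym t k
  | .inl i => .inl i
  | .inr (i, b) => .inr (i, !b)

/-- Action of a sign on a color: a positive sign acts trivially,
a negative sign acts by negation. -/
def signAct {t k : ℕ} (s : Bool) (x : Sym t k) : Sym t k :=
  if s then x else symNeg x

variable {V : Type*}

/-- A proper `S_{2k}^t`-coloring of the signed graph `(G, σ)`:
`c v ≠ σ(e) · c w` for every edge `e = vw`. -/
def IsProperColoring (G : SimpleGraph V) (σ : Sym2 V → Bool) {t k : ℕ}
    (c : V → Sym t k) : Prop :=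
  ∀ ⦃v w : V⦄, G.Adj v w → c v ≠ signAct (σ s(v, w)) (c w)

/-- `(G, σ)` admits a proper `S_{2k}^t`-coloring. -/
def SymColorable (G : SimpleGraph V) (σ : Sym2 V → Bool) (t k : ℕ) : Prop :=
  ∃ c : V → Sym t k, IsProperColoring G σ c

/-- The symset `t`-chromatic number `χ^t_sym(G, σ)`: the least `t + 2k`
such that `(G, σ)` admits a proper `S_{2k}^t`-coloring. -/
noncomputable def symChromT (G : SimpleGraph V) (σ : Sym2 V → Bool) (t : ℕ) : ℕ :=
  sInf {n | ∃ k, n = t + 2 * k ∧ SymColorable G σ t k}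

/-- The chromatic number of the underlying graph, as a natural number. -/
noncomputable def chrom (G : SimpleGraph V) : ℕ := G.chromaticNumber.toNat

/-- The symset chromatic number `χ_sym(G, σ)`: the minimum of
`χ^t_sym(G, σ)` over `0 ≤ t ≤ χ(G)`. -/
noncomputable def symChrom (G : SimpleGraph V) (σ : Sym2 V → Bool) : ℕ :=
  sInf {n | ∃ t ≤ chrom G, n = symChromT G σ t}

/-- Switching a signature at the vertex set `X = {v | X v = true}`:
the sign of every edge with exactly one end in `X` is reversed. -/
def switch (X : V → Bool) (σ : Sym2 V → Bool) : Sym2 V → Bool :=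
  fun e =>
    xor (Sym2.lift ⟨fun u v => xor (X u) (X v), fun u v => by simp [Bool.xor_comm]⟩ e) (σ e)

/-- Two signatures of `G` are equivalent if one is obtained from the other by a
switching (equality of signs is only required on the edges of `G`). -/
def Equivalent (G : SimpleGraph V) (σ σ' : Sym2 V → Bool) : Prop :=
  ∃ X : V → Bool, ∀ e ∈ G.edgeSet, σ' e = switch X σ e

/-- The number of negative edges of a closed walk. -/
def negCount (σ : Sym2 V → Bool) {G : SimpleGraph V} {u : V} (w : G.Walk u u) : ℕ :=
  (w.edges.filter (fun e => !σ e)).length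

/-- `(G, σ)` is balanced: every circuit has sign `+1`,
i.e. an even number of negative edges. -/
def Balanced (G : SimpleGraph V) (σ : Sym2 V → Bool) : Prop :=
  ∀ ⦃u : V⦄ (w : G.Walk u u), w.IsCycle → Even (negCount σ w)

/-- `(G, σ)` is antibalanced: every even circuit has sign `+1` and every odd
circuit has sign `-1`. -/
def Antibalanced (G : SimpleGraph V) (σ : Sym2 V → Bool) : Prop :=
  ∀ ⦃u : V⦄ (w : G.Walk u u), w.IsCycle → (Even w.length ↔ Even (negCount σ w))

/-- Restriction of a signature to (the induced subgraph on) a vertex subset. -/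
def restrict (σ : Sym2 V → Bool) (s : Set V) : Sym2 s → Bool :=
  fun e => σ (Sym2.map Subtype.val e)

/-- A circuit: a connected 2-regular graph. -/
def IsCircuit (G : SimpleGraph V) [Fintype V] [DecidableRel G.Adj] : Prop :=
  G.Connected ∧ G.IsRegularOfDegree 2

/-- The frustration index `l(G, σ)`: the least number of edges whose deletion
makes the signed graph balanced. -/
noncomputable def frustrationIndex (G : SimpleGraph V) (σ : Sym2 V → Bool) : ℕ :=
  sInf {n | ∃ F : Finset (Sym2 V), F.card = n ∧ Balanced (G.deleteEdges ↑F) σ}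

/-- A proper coloring of the signed expansion `±G` (each edge of `G` replaced by
a positive and a negative parallel edge): for each edge `vw` of `G`,
`c v ∉ {c w, -c w}`. -/
def IsProperExpColoring (G : SimpleGraph V) {t k : ℕ} (c : V → Sym t k) : Prop :=
  ∀ ⦃v w : V⦄, G.Adj v w → c v ≠ c w ∧ c v ≠ symNeg (c w)

/-- The symset `t`-chromatic number of the signed expansion `±G`. -/
noncomputable def expSymChromT (G : SimpleGraph V) (t : ℕ) : ℕ :=
  sInf {n | ∃ k, n = t + 2 * k ∧ ∃ c : V → Sym t k, IsProperExpColoring G c}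

end SymSet

namespace SymSet

private lemma signAct_signAct {t k : ℕ} (s : Bool) (x : Sym t k) :
    signAct s (signAct s x) = x := by
  cases s <;> rcases x with i | ⟨i, b⟩ <;> simp [signAct, symNeg]

private lemma ne_signAct_comm {t k : ℕ} (s : Bool) (x y : Sym t k) :
    x ≠ signAct s y ↔ y ≠ signAct s x := by
  constructor <;> (intro h heq; apply h; rw [heq, signAct_signAct])

private lemma signAct_eq_self_k0 {t : ℕ} (s : Bool) (x : Sym t 0) : signAct s x = x := by
  cases s <;> rcases x with i | ⟨i, b⟩ <;> first
    | exact i.elim0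
    | simp [signAct, symNeg]

private lemma signAct_inr {t k : ℕ} (s : Bool) (i : Fin k) (b : Bool) :
    signAct s (Sum.inr (i, b) : Sym t k) = Sum.inr (i, if s then b else !b) := by
  cases s <;> simp [signAct, symNeg]

private lemma exists_other {V : Type*} [Fintype V] (G : SimpleGraph V) [DecidableRel G.Adj]
    (hreg : G.IsRegularOfDegree 2) {v u : V} (h : G.Adj v u) :
    ∃ w, G.Adj v w ∧ w ≠ u ∧ ∀ x, G.Adj v x → x = u ∨ x = w := by
  classical
  have hc : (G.neighborFinset v).card = 2 := hreg v
  obtain ⟨a, b, hab, hS⟩ := Finset.card_eq_two.mp hc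
  have hu : u ∈ G.neighborFinset v := by rwa [SimpleGraph.mem_neighborFinset]
  have hmem : ∀ x, G.Adj v x → (x = a ∨ x = b) := by
    intro x hx
    have : x ∈ G.neighborFinset v := by rwa [SimpleGraph.mem_neighborFinset]
    rw [hS] at this
    simpa using this
  rw [hS] at hu
  simp only [Finset.mem_insert, Finset.mem_singleton] at hu
  rcases hu with rfl | rfl
  · have hb : G.Adj v b := by
      have : b ∈ G.neighborFinset v := by rw [hS]; simp
      rwa [SimpleGraph.mem_neighborFinset] at this
    exact ⟨b, hb, hab.symm, hmem⟩
  · have ha : G.Adj v a := by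
      have : a ∈ G.neighborFinset v := by rw [hS]; simp
      rwa [SimpleGraph.mem_neighborFinset] at this
    exact ⟨a, ha, hab, fun x hx => (hmem x hx).symm⟩



private lemma cycle_structure {V : Type*} [Fintype V] (G : SimpleGraph V) [DecidableRel G.Adj]
    (hconn : G.Connected) (hreg : G.IsRegularOfDegree 2) :
    3 ≤ Fintype.card V ∧ ∃ f : ℕ → V,
      (∀ k, f (k + Fintype.card V) = f k) ∧
      (∀ a b, a < Fintype.card V → b < Fintype.card V → f a = f b → a = b) ∧
      (∀ v, ∃ k, k < Fintype.card V ∧ f k = v) ∧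
      (∀ a b, G.Adj (f a) (f b) ↔
        ((a + 1) % Fintype.card V = b % Fintype.card V ∨
         (b + 1) % Fintype.card V = a % Fintype.card V)) := by
  classical
  obtain ⟨v0⟩ := hconn.nonempty
  have hdeg : 0 < G.degree v0 := by rw [hreg v0]; norm_num
  obtain ⟨a0, ha0⟩ := G.degree_pos_iff_exists_adj v0 |>.mp hdeg
  -- the non-backtracking sequence
  set next : V → V → V := fun x y => if h : G.Adj y x then Classical.choose (exists_other G hreg h) else y with hnext
  set F : ℕ → V × V := fun k => Nat.rec (v0, a0) (fun _ p => (p.2, next p.1 p.2)) k with hF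
  set f : ℕ → V := fun k => (F k).1 with hf
  have hrec : ∀ k, f (k + 2) = next (f k) (f (k + 1)) := fun k => rfl
  have hstep : ∀ k, G.Adj (f k) (f (k + 1)) →
      G.Adj (f (k + 1)) (f (k + 2)) ∧ f (k + 2) ≠ f k ∧
      (∀ x, G.Adj (f (k + 1)) x → x = f k ∨ x = f (k + 2)) := by
    intro k hk
    have h' : G.Adj (f (k + 1)) (f k) := hk.symm
    have heq : f (k + 2) = Classical.choose (exists_other G hreg h') := by
      rw [hrec k, hnext]
      simp [h']
    obtain ⟨hw1, hw2, hw3⟩ := Classical.choose_spec (exists_other G hreg h')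
    rw [← heq] at hw1 hw2 hw3
    exact ⟨hw1, hw2, hw3⟩
  have hA : ∀ k, G.Adj (f k) (f (k + 1)) := by
    intro k
    induction k with
    | zero => exact ha0
    | succ k ih => exact (hstep k ih).1
  have hNe : ∀ k, f (k + 2) ≠ f k := fun k => (hstep k (hA k)).2.1
  have hNbr : ∀ k x, G.Adj (f (k + 1)) x → x = f k ∨ x = f (k + 2) :=
    fun k => (hstep k (hA k)).2.2
  clear hstep hF hnext
  -- first repeat time
  have hSne : ∃ k, 0 < k ∧ ∃ j, j < k ∧ f j = f k := by
    obtain ⟨x, y, hxy, hfxy⟩ := Fintype.exists_ne_map_eq_of_card_lt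
      (fun i : Fin (Fintype.card V + 1) => f i) (by simp)
    rcases lt_trichotomy (x : ℕ) (y : ℕ) with h | h | h
    · exact ⟨y, by omega, x, h, hfxy⟩
    · exact absurd (Fin.ext h) hxy
    · exact ⟨x, by omega, y, h, hfxy.symm⟩
  set m := sInf {k | 0 < k ∧ ∃ j, j < k ∧ f j = f k} with hm'
  obtain ⟨hm0, j0, hj0, hfj0⟩ : 0 < m ∧ ∃ j, j < m ∧ f j = f m := Nat.sInf_mem hSne
  have hinj : ∀ i j, i < m → j < m → f i = f j → i = j := by
    intro i j hi hj hfij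
    by_contra hne
    rcases lt_trichotomy i j with h | h | h
    · have hmem : j ∈ {k | 0 < k ∧ ∃ j, j < k ∧ f j = f k} := ⟨by omega, i, h, hfij⟩
      have := Nat.sInf_le hmem
      omega
    · exact hne h
    · have hmem : i ∈ {k | 0 < k ∧ ∃ j, j < k ∧ f j = f k} := ⟨by omega, j, h, hfij.symm⟩
      have := Nat.sInf_le hmem
      omega
  clear_value m
  clear hm' hSne
  -- the repeat is with index 0
  have hj00 : j0 = 0 := by
    by_contra hj0ne
    obtain ⟨j', rfl⟩ : ∃ j', j0 = j' + 1 := ⟨j0 - 1, by omega⟩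
    have hm1 : G.Adj (f (m - 1)) (f m) := by
      have := hA (m - 1)
      rwa [show m - 1 + 1 = m by omega] at this
    have hadj' : G.Adj (f (j' + 1)) (f (m - 1)) := by
      have := hm1.symm
      rwa [← hfj0] at this
    rcases hNbr j' _ hadj' with h | h
    · have h3 := hinj (m - 1) j' (by omega) (by omega) h
      omega
    · rcases Nat.lt_or_ge (j' + 2) m with h2 | h2
      · have h3 : m - 1 = j' + 2 := hinj (m - 1) (j' + 2) (by omega) h2 h
        have h4 : f (j' + 1 + 2) = f (j' + 1) := by
          rw [show j' + 1 + 2 = m by omega]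
          exact hfj0.symm
        exact hNe (j' + 1) h4
      · have hj2m : j' + 2 = m := by omega
        rw [hj2m] at h
        exact G.ne_of_adj hm1 h
  rw [hj00] at hfj0
  clear hj00 hj0
  -- m ≥ 3
  have hm3 : 3 ≤ m := by
    have h1 : m ≠ 1 := by
      intro h; rw [h] at hfj0; exact G.ne_of_adj (hA 0) hfj0
    have h2 : m ≠ 2 := by
      intro h; rw [h] at hfj0; exact hNe 0 hfj0.symm
    omega
  -- periodicity
  have hm1 : f (m + 1) = f 1 := by
    have hnb := hNbr (m - 1)
    rw [show m - 1 + 1 = m by omega, show m - 1 + 2 = m + 1 by omega] at hnb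
    have hadj1 : G.Adj (f m) (f 1) := by
      have := hA 0
      rwa [hfj0] at this
    rcases hnb _ hadj1 with h | h
    · have h2 := hinj 1 (m - 1) (by omega) (by omega) h
      omega
    · exact h.symm
  have hper' : ∀ k, f (k + m) = f k ∧ f (k + m + 1) = f (k + 1) := by
    intro k
    induction k with
    | zero => exact ⟨by simpa using hfj0.symm, by simpa using hm1⟩
    | succ k ih =>
      constructor
      · rw [show k + 1 + m = k + m + 1 by omega]; exact ih.2
      · rw [show k + 1 + m + 1 = k + m + 2 by omega, hrec (k + m), ih.1, ih.2, ← hrec k,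
          show k + 1 + 1 = k + 2 by omega]
  have hper : ∀ k, f (k + m) = f k := fun k => (hper' k).1
  have hmod : ∀ k, f (k % m) = f k := by
    intro k
    induction k using Nat.strong_induction_on with
    | _ k ih =>
      rcases Nat.lt_or_ge k m with h | h
      · rw [Nat.mod_eq_of_lt h]
      · have h1 : k % m = (k - m) % m := by
          conv_lhs => rw [show k = k - m + m by omega]
          rw [Nat.add_mod_right]
        rw [h1, ih (k - m) (by omega), ← hper (k - m), show k - m + m = k by omega]
  -- surjectivity via connectivity
  have key : ∀ v, (∃ k, f k = v) → ∀ x, G.Adj v x → ∃ k, f k = x := by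
    rintro v ⟨k, rfl⟩ x hx
    have h1 : G.Adj (f (k + m - 1 + 1)) x := by
      rw [show k + m - 1 + 1 = k + m by omega, hper k]
      exact hx
    rcases hNbr _ _ h1 with h | h
    · exact ⟨k + m - 1, h.symm⟩
    · exact ⟨k + m - 1 + 2, h.symm⟩
  have walkT : ∀ (u w : V), G.Walk u w → (∃ k, f k = u) → ∃ k', f k' = w := by
    intro u w p
    induction p with
    | nil => exact id
    | cons h q ih => exact fun hu => ih (key _ hu _ h)
  have hT : ∀ v : V, ∃ k, k < m ∧ f k = v := by
    intro v
    obtain ⟨k, hk⟩ := (hconn.preconnected v0 v).elim (fun p => walkT v0 v p ⟨0, rfl⟩)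
    exact ⟨k % m, Nat.mod_lt _ hm0, by rw [hmod]; exact hk⟩
  clear key walkT hfj0 hm1 hper' ha0 hdeg
  -- m = card V
  have hcard : m = Fintype.card V := by
    have himg : (Finset.range m).image f = Finset.univ := by
      apply Finset.eq_univ_of_forall
      intro v
      obtain ⟨k, hk, hfk⟩ := hT v
      exact Finset.mem_image.mpr ⟨k, Finset.mem_range.mpr hk, hfk⟩
    have h1 : ((Finset.range m).image f).card = m := by
      rw [Finset.card_image_of_injOn, Finset.card_range]
      intro i hi j hj hij
      exact hinj i j (Finset.mem_range.mp hi) (Finset.mem_range.mp hj) hij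
    rw [himg, Finset.card_univ] at h1
    exact h1.symm
  -- adjacency characterization
  have feq : ∀ a b, f a = f b ↔ a % m = b % m := by
    intro a b
    constructor
    · intro h
      apply hinj _ _ (Nat.mod_lt _ hm0) (Nat.mod_lt _ hm0)
      rw [hmod, hmod]; exact h
    · intro h
      rw [← hmod a, ← hmod b, h]
  have hAdjChar : ∀ a b, G.Adj (f a) (f b) ↔
      ((a + 1) % m = b % m ∨ (b + 1) % m = a % m) := by
    intro a b
    have hmm : ∀ x : ℕ, x % m % m = x % m := fun x => Nat.mod_mod_of_dvd _ dvd_rfl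
    constructor
    · intro hab
      have h1 : G.Adj (f (a % m + m - 1 + 1)) (f b) := by
        rw [show a % m + m - 1 + 1 = a % m + m by omega, hper, hmod]
        exact hab
      rcases hNbr _ _ h1 with h | h
      · right
        have h' : b % m = (a % m + m - 1) % m := (feq b (a % m + m - 1)).mp h
        calc (b + 1) % m = (b % m + 1) % m := (Nat.mod_add_mod b m 1).symm
          _ = ((a % m + m - 1) % m + 1) % m := by rw [h']
          _ = (a % m + m - 1 + 1) % m := Nat.mod_add_mod _ m 1
          _ = (a % m + m) % m := by rw [show a % m + m - 1 + 1 = a % m + m by omega]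
          _ = a % m % m := Nat.add_mod_right _ m
          _ = a % m := hmm a
      · left
        have h' : b % m = (a % m + m - 1 + 2) % m := (feq b (a % m + m - 1 + 2)).mp h
        rw [show a % m + m - 1 + 2 = (a % m + 1) + m by omega, Nat.add_mod_right] at h'
        calc (a + 1) % m = (a % m + 1) % m := (Nat.mod_add_mod a m 1).symm
          _ = b % m := h'.symm
    · intro hab
      rcases hab with h | h
      · have hb : f b = f (a + 1) := (feq b (a + 1)).mpr h.symm
        rw [hb]; exact hA a
      · have ha : f a = f (b + 1) := (feq a (b + 1)).mpr h.symm
        rw [ha]; exact (hA b).symm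
  rw [← hcard]
  exact ⟨hm3, f, hper, hinj, hT, hAdjChar⟩


private lemma exists_ham_cycle {V : Type*} (G : SimpleGraph V) (n : ℕ) (hn : 3 ≤ n)
    (f : ℕ → V) (hA : ∀ k, G.Adj (f k) (f (k + 1)))
    (hper0 : f n = f 0)
    (hinj : ∀ a b, a < n → b < n → f a = f b → a = b) :
    ∃ w : G.Walk (f 0) (f 0), w.IsCycle ∧
      w.edges = (List.range n).map (fun j => s(f j, f (j + 1))) := by
  classical
  have hmodinj : ∀ a b, a ≤ n → b ≤ n → f a = f b → a % n = b % n := by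
    intro a b ha hb hab
    have ha' : f (a % n) = f a := by
      rcases Nat.lt_or_ge a n with h | h
      · rw [Nat.mod_eq_of_lt h]
      · have : a = n := by omega
        subst this
        rw [Nat.mod_self, hper0]
    have hb' : f (b % n) = f b := by
      rcases Nat.lt_or_ge b n with h | h
      · rw [Nat.mod_eq_of_lt h]
      · have : b = n := by omega
        subst this
        rw [Nat.mod_self, hper0]
    exact hinj _ _ (Nat.mod_lt _ (by omega)) (Nat.mod_lt _ (by omega))
      (by rw [ha', hb', hab])
  let W : (k : ℕ) → G.Walk (f 0) (f k) := fun k =>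
    Nat.rec SimpleGraph.Walk.nil (fun k p => p.concat (hA k)) k
  have hedges : ∀ k, (W k).edges = (List.range k).map (fun j => s(f j, f (j + 1))) := by
    intro k
    induction k with
    | zero => simp [W]
    | succ k ih =>
      show ((W k).concat (hA k)).edges = _
      rw [SimpleGraph.Walk.edges_concat, ih, List.range_succ, List.map_append]
      simp
  have hsupp : ∀ k, (W k).support = (List.range (k + 1)).map f := by
    intro k
    induction k with
    | zero => simp [W, List.range_succ]
    | succ k ih =>
      show ((W k).concat (hA k)).support = _
      rw [SimpleGraph.Walk.support_concat, ih, List.range_succ (n := k + 1), List.map_append]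
      simp
  refine ⟨(W n).copy rfl hper0, ?_, ?_⟩
  swap
  · rw [SimpleGraph.Walk.edges_copy]
    exact hedges n
  constructor
  constructor
  · -- IsTrail : edges nodup
    constructor
    rw [SimpleGraph.Walk.edges_copy, hedges n]
    refine List.Nodup.map_on ?_ List.nodup_range
    intro a ha b hb hab
    rw [List.mem_range] at ha hb
    rcases Sym2.eq_iff.mp hab with ⟨h1, h2⟩ | ⟨h1, h2⟩
    · exact hinj a b ha hb h1
    · -- f a = f (b+1), f (a+1) = f b
      have e1 : a % n = (b + 1) % n := hmodinj a (b + 1) (by omega) (by omega) h1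
      have e2 : (a + 1) % n = b % n := hmodinj (a + 1) b (by omega) (by omega) h2
      rw [Nat.mod_eq_of_lt ha] at e1
      rw [Nat.mod_eq_of_lt hb] at e2
      rcases Nat.lt_or_ge (b + 1) n with h | h
      · rw [Nat.mod_eq_of_lt h] at e1
        rcases Nat.lt_or_ge (a + 1) n with h' | h'
        · rw [Nat.mod_eq_of_lt h'] at e2
          omega
        · have : a + 1 = n := by omega
          rw [this, Nat.mod_self] at e2
          omega
      · have hb1 : b + 1 = n := by omega
        rw [hb1, Nat.mod_self] at e1
        rcases Nat.lt_or_ge (a + 1) n with h' | h'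
        · rw [Nat.mod_eq_of_lt h'] at e2
          omega
        · have : a + 1 = n := by omega
          rw [this, Nat.mod_self] at e2
          omega
  · -- ne_nil
    intro hnil
    have : ((W n).copy rfl hper0).edges = [] := by rw [hnil]; rfl
    rw [SimpleGraph.Walk.edges_copy, hedges n] at this
    have : ((List.range n).map (fun j => s(f j, f (j + 1)))).length = 0 := by rw [this]; rfl
    simp at this
    omega
  · -- support tail nodup
    rw [SimpleGraph.Walk.support_copy, hsupp n, List.range_succ_eq_map, List.map_cons,
      List.tail_cons, List.map_map]
    refine List.Nodup.map_on ?_ List.nodup_range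
    intro a ha b hb hab
    rw [List.mem_range] at ha hb
    have := hmodinj (a + 1) (b + 1) (by omega) (by omega) hab
    rcases Nat.lt_or_ge (a + 1) n with h | h <;> rcases Nat.lt_or_ge (b + 1) n with h' | h'
    · rw [Nat.mod_eq_of_lt h, Nat.mod_eq_of_lt h'] at this; omega
    · rw [Nat.mod_eq_of_lt h, show b + 1 = n by omega, Nat.mod_self] at this; omega
    · rw [Nat.mod_eq_of_lt h', show a + 1 = n by omega, Nat.mod_self] at this; omega
    · omega


/-- parity of a potential along a walk -/
private lemma parity_along_walk {V : Type*} {G : SimpleGraph V} (σ : Sym2 V → Bool) (b : V → Bool)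
    (hpot : ∀ ⦃x y : V⦄, G.Adj x y → (σ s(x, y) = false ↔ b x ≠ b y)) :
    ∀ {u v : V} (p : G.Walk u v), Odd (p.edges.countP (fun e => !σ e)) ↔ b u ≠ b v := by
  intro u v p
  induction p with
  | nil => simp
  | @cons u x v h q ih =>
    rw [SimpleGraph.Walk.edges_cons, List.countP_cons]
    have hx := hpot h
    cases hσ : σ s(u, x)
    · have hne : b u ≠ b x := hx.mp hσ
      simp only [hσ, Bool.not_false, if_pos, Nat.odd_add_one]
      rw [Nat.not_odd_iff_even, ← Nat.not_odd_iff_even, ih]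
      revert hne
      cases b u <;> cases b x <;> cases b v <;> simp
    · have heq : b u = b x := by
        by_contra hne
        rw [hx.mpr hne] at hσ
        cases hσ
      simp only [hσ, Bool.not_true]
      rw [if_neg (by simp), Nat.add_zero, ih, heq]

/-- the canonical parity sequence -/
private def pb (s : ℕ → Bool) (j : ℕ) : Bool := decide (Odd ((List.range j).countP s))

private lemma pb_zero (s : ℕ → Bool) : pb s 0 = false := by simp [pb]

private lemma pb_step (s : ℕ → Bool) (j : ℕ) : pb s (j + 1) = ((s j).xor (pb s j)) := by
  unfold pb
  rw [List.range_succ, List.countP_append]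
  cases hs : s j <;>
    simp [hs, List.countP_cons, Nat.odd_add_one, ← Nat.not_odd_iff_even, decide_not]

private lemma parity_seq (s : ℕ → Bool) (β : ℕ → Bool)
    (hβ : ∀ j, β (j + 1) = ((s j).xor (β j))) :
    ∀ m1, β m1 = ((pb s m1).xor (β 0)) := by
  intro m1
  induction m1 with
  | zero => simp [pb_zero]
  | succ m ih =>
    rw [hβ m, ih, pb_step]
    cases s m <;> cases pb s m <;> cases β 0 <;> simp



section Transfer

variable {V : Type*} {G : SimpleGraph V} {σ : Sym2 V → Bool} {n : ℕ} {f : ℕ → V} {s : ℕ → Bool}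

private lemma colorable_of_data
    (hn : 3 ≤ n)
    (hper : ∀ k, f (k + n) = f k)
    (hsurj : ∀ v, ∃ k, k < n ∧ f k = v)
    (hadj : ∀ a b, a < n → b < n → G.Adj (f a) (f b) → ((a + 1) % n = b ∨ (b + 1) % n = a))
    (hs : ∀ j, σ s(f j, f (j + 1)) = s j)
    {t k : ℕ} (g : ℕ → Sym t k)
    (hstep : ∀ j, j + 1 < n → g (j + 1) ≠ signAct (s j) (g j))
    (hwrap : g 0 ≠ signAct (s (n - 1)) (g (n - 1))) :
    SymColorable G σ t k := by
  classical
  have hfn : f n = f 0 := by have := hper 0; rwa [Nat.zero_add] at this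
  have hs' : σ s(f (n - 1), f 0) = s (n - 1) := by
    have := hs (n - 1)
    rwa [show n - 1 + 1 = n by omega, hfn] at this
  choose idx hidx1 hidx2 using hsurj
  refine ⟨fun v => g (idx v), ?_⟩
  intro v w hvw
  have hvw' : G.Adj (f (idx v)) (f (idx w)) := by rw [hidx2, hidx2]; exact hvw
  have hσvw : σ s(v, w) = σ s(f (idx v), f (idx w)) := by rw [hidx2, hidx2]
  rcases hadj _ _ (hidx1 v) (hidx1 w) hvw' with h | h
  · have hiv := hidx1 v
    have hiw := hidx1 w
    rcases Nat.lt_or_ge (idx v + 1) n with h' | h'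
    · rw [Nat.mod_eq_of_lt h'] at h
      have e : σ s(v, w) = s (idx v) := by rw [hσvw, ← h]; exact hs (idx v)
      show g (idx v) ≠ signAct (σ s(v, w)) (g (idx w))
      rw [e, ← h]
      exact (ne_signAct_comm _ _ _).mp (hstep (idx v) h')
    · have hv : idx v = n - 1 := by omega
      have h0 : idx w = 0 := by
        rw [hv, show n - 1 + 1 = n by omega, Nat.mod_self] at h
        omega
      have e : σ s(v, w) = s (n - 1) := by rw [hσvw, hv, h0]; exact hs'
      show g (idx v) ≠ signAct (σ s(v, w)) (g (idx w))
      rw [e, hv, h0]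
      exact (ne_signAct_comm _ _ _).mp hwrap
  · have hiv := hidx1 v
    have hiw := hidx1 w
    rcases Nat.lt_or_ge (idx w + 1) n with h' | h'
    · rw [Nat.mod_eq_of_lt h'] at h
      have e : σ s(v, w) = s (idx w) := by
        rw [hσvw, ← h, Sym2.eq_swap]; exact hs (idx w)
      show g (idx v) ≠ signAct (σ s(v, w)) (g (idx w))
      rw [e, ← h]
      exact hstep (idx w) h'
    · have hw : idx w = n - 1 := by omega
      have h0 : idx v = 0 := by
        rw [hw, show n - 1 + 1 = n by omega, Nat.mod_self] at h
        omega
      have e : σ s(v, w) = s (n - 1) := by rw [hσvw, hw, h0, Sym2.eq_swap]; exact hs'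
      show g (idx v) ≠ signAct (σ s(v, w)) (g (idx w))
      rw [e, hw, h0]
      exact hwrap

private lemma seq_of_colorable
    (hA : ∀ j, G.Adj (f j) (f (j + 1)))
    (hper : ∀ k, f (k + n) = f k)
    (hs : ∀ j, σ s(f j, f (j + 1)) = s j)
    {t k : ℕ} (h : SymColorable G σ t k) :
    ∃ g : ℕ → Sym t k, (∀ j, g (j + 1) ≠ signAct (s j) (g j)) ∧ g n = g 0 := by
  obtain ⟨c, hc⟩ := h
  have hfn : f n = f 0 := by have := hper 0; rwa [Nat.zero_add] at this
  refine ⟨fun j => c (f j), fun j => ?_, by show c (f n) = c (f 0); rw [hfn]⟩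
  have hcc := hc (hA j)
  rw [hs j] at hcc
  exact (ne_signAct_comm _ _ _).mp hcc

end Transfer


section Facts

variable {V : Type*} {G : SimpleGraph V} {σ : Sym2 V → Bool} {n : ℕ} {f : ℕ → V} {s : ℕ → Bool}

private lemma fact_col30
    (hn : 3 ≤ n) (hper : ∀ k, f (k + n) = f k) (hsurj : ∀ v, ∃ k, k < n ∧ f k = v)
    (hadj : ∀ a b, a < n → b < n → G.Adj (f a) (f b) → ((a + 1) % n = b ∨ (b + 1) % n = a))
    (hs : ∀ j, σ s(f j, f (j + 1)) = s j) :
    SymColorable G σ 3 0 := by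
  refine colorable_of_data hn hper hsurj hadj hs
    (fun j => if j = n - 1 then Sum.inl ⟨2, by omega⟩ else Sum.inl ⟨j % 2, by omega⟩) ?_ ?_
  · intro j hj
    beta_reduce
    rw [signAct_eq_self_k0]
    rcases eq_or_ne (j + 1) (n - 1) with h | h
    · rw [if_pos h, if_neg (by omega)]
      simp only [ne_eq, Sum.inl.injEq, Fin.mk.injEq]
      omega
    · rw [if_neg h, if_neg (by omega)]
      simp only [ne_eq, Sum.inl.injEq, Fin.mk.injEq]
      omega
  · beta_reduce
    rw [signAct_eq_self_k0, if_neg (show ¬((0:ℕ) = n - 1) by omega), if_pos rfl]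
    simp only [ne_eq, Sum.inl.injEq, Fin.mk.injEq]
    omega

private lemma fact_col_t1 {t : ℕ} (ht : 0 < t)
    (hn : 3 ≤ n) (hper : ∀ k, f (k + n) = f k) (hsurj : ∀ v, ∃ k, k < n ∧ f k = v)
    (hadj : ∀ a b, a < n → b < n → G.Adj (f a) (f b) → ((a + 1) % n = b ∨ (b + 1) % n = a))
    (hs : ∀ j, σ s(f j, f (j + 1)) = s j) :
    SymColorable G σ t 1 := by
  set g : ℕ → Sym t 1 := fun j => Nat.rec (Sum.inl ⟨0, ht⟩)
    (fun j' x => if signAct (s j') x = Sum.inr (⟨0, one_pos⟩, true) then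
      Sum.inr (⟨0, one_pos⟩, false) else Sum.inr (⟨0, one_pos⟩, true)) j with hg
  have hgs : ∀ j, g (j + 1) = if signAct (s j) (g j) = Sum.inr (⟨0, one_pos⟩, true) then
      Sum.inr (⟨0, one_pos⟩, false) else Sum.inr (⟨0, one_pos⟩, true) := fun j => rfl
  have hstep : ∀ j, g (j + 1) ≠ signAct (s j) (g j) := by
    intro j
    rw [hgs j]
    by_cases h : signAct (s j) (g j) = Sum.inr (⟨0, one_pos⟩, true)
    · rw [if_pos h, h]
      simp
    · rw [if_neg h]
      exact fun hc => h hc.symm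
  have hinr : ∀ j, ∃ b, g (j + 1) = Sum.inr (⟨0, one_pos⟩, b) := by
    intro j
    rw [hgs j]
    by_cases h : signAct (s j) (g j) = Sum.inr (⟨0, one_pos⟩, true)
    · exact ⟨false, by rw [if_pos h]⟩
    · exact ⟨true, by rw [if_neg h]⟩
  refine colorable_of_data hn hper hsurj hadj hs g (fun j _ => hstep j) ?_
  obtain ⟨b, hb⟩ := hinr (n - 2)
  rw [show n - 2 + 1 = n - 1 by omega] at hb
  rw [hb, signAct_inr]
  have hg0 : g 0 = Sum.inl ⟨0, ht⟩ := rfl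
  rw [hg0]
  simp

private lemma fact_col02
    (hn : 3 ≤ n) (hper : ∀ k, f (k + n) = f k) (hsurj : ∀ v, ∃ k, k < n ∧ f k = v)
    (hadj : ∀ a b, a < n → b < n → G.Adj (f a) (f b) → ((a + 1) % n = b ∨ (b + 1) % n = a))
    (hs : ∀ j, σ s(f j, f (j + 1)) = s j) :
    SymColorable G σ 0 2 := by
  have pick : ∀ a b : Sym 0 2, ∃ x : Sym 0 2, x ≠ a ∧ x ≠ b := by decide
  obtain ⟨x, hx1, hx2⟩ := pick (signAct (s (n - 2)) (Sum.inr (⟨(n - 2) % 2, by omega⟩, true)))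
    (signAct (s (n - 1)) (Sum.inr (⟨0 % 2, by omega⟩, true)))
  refine colorable_of_data hn hper hsurj hadj hs
    (fun j => if j = n - 1 then x else Sum.inr (⟨j % 2, by omega⟩, true)) ?_ ?_
  · intro j hj
    beta_reduce
    have hjne : j ≠ n - 1 := by omega
    rcases eq_or_ne (j + 1) (n - 1) with h | h
    · rw [if_pos h, if_neg hjne]
      have hj2 : j = n - 2 := by omega
      subst hj2
      exact hx1
    · rw [if_neg h, if_neg hjne, signAct_inr]
      simp only [ne_eq, Sum.inr.injEq, Prod.mk.injEq, Fin.mk.injEq, not_and]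
      intro hc
      omega
  · beta_reduce
    rw [if_neg (show ¬((0:ℕ) = n - 1) by omega), if_pos rfl, ne_signAct_comm]
    exact hx2

private lemma fact_col20 (hE : Even n)
    (hn : 3 ≤ n) (hper : ∀ k, f (k + n) = f k) (hsurj : ∀ v, ∃ k, k < n ∧ f k = v)
    (hadj : ∀ a b, a < n → b < n → G.Adj (f a) (f b) → ((a + 1) % n = b ∨ (b + 1) % n = a))
    (hs : ∀ j, σ s(f j, f (j + 1)) = s j) :
    SymColorable G σ 2 0 := by
  rw [Nat.even_iff] at hE
  refine colorable_of_data (t := 2) (k := 0) hn hper hsurj hadj hs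
    (fun j => Sum.inl ⟨j % 2, by omega⟩) ?_ ?_
  · intro j hj
    beta_reduce
    rw [signAct_eq_self_k0]
    simp only [ne_eq, Sum.inl.injEq, Fin.mk.injEq]
    omega
  · beta_reduce
    rw [signAct_eq_self_k0]
    simp only [ne_eq, Sum.inl.injEq, Fin.mk.injEq]
    omega

private lemma fact_col01 (hE : Even ((List.range n).countP s))
    (hn : 3 ≤ n) (hper : ∀ k, f (k + n) = f k) (hsurj : ∀ v, ∃ k, k < n ∧ f k = v)
    (hadj : ∀ a b, a < n → b < n → G.Adj (f a) (f b) → ((a + 1) % n = b ∨ (b + 1) % n = a))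
    (hs : ∀ j, σ s(f j, f (j + 1)) = s j) :
    SymColorable G σ 0 1 := by
  refine colorable_of_data hn hper hsurj hadj hs
    (fun j => Sum.inr (⟨0, one_pos⟩, pb s j)) ?_ ?_
  · intro j hj
    beta_reduce
    rw [signAct_inr, pb_step]
    cases hsj : s j <;> cases hpb : pb s j <;> simp [hsj, hpb]
  · beta_reduce
    rw [signAct_inr]
    have h1 : ((s (n - 1)).xor (pb s (n - 1))) = false := by
      rw [← pb_step, show n - 1 + 1 = n by omega]
      simp [pb, Nat.not_odd_iff_even.mpr hE]
    have h0 : pb s 0 = false := pb_zero s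
    rw [h0]
    revert h1
    cases s (n - 1) <;> cases pb s (n - 1) <;> simp

private lemma fact_not00 (v : V) : ¬ SymColorable G σ 0 0 := by
  rintro ⟨c, -⟩
  rcases hc : c v with i | p
  · exact i.elim0
  · exact p.1.elim0

private lemma fact_not10
    (hA : ∀ j, G.Adj (f j) (f (j + 1))) (hper : ∀ k, f (k + n) = f k)
    (hs : ∀ j, σ s(f j, f (j + 1)) = s j) :
    ¬ SymColorable G σ 1 0 := by
  intro h
  obtain ⟨g, hgstep, -⟩ := seq_of_colorable hA hper hs h
  have hall : ∀ x : Sym 1 0, x = Sum.inl ⟨0, one_pos⟩ := by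
    intro x
    rcases x with i | p
    · rw [Subsingleton.elim i ⟨0, one_pos⟩]
    · exact p.1.elim0
  exact hgstep 0 (by rw [signAct_eq_self_k0, hall (g 1), hall (g 0)])

private lemma fact_20_even
    (hA : ∀ j, G.Adj (f j) (f (j + 1))) (hper : ∀ k, f (k + n) = f k)
    (hs : ∀ j, σ s(f j, f (j + 1)) = s j)
    (h : SymColorable G σ 2 0) : Even n := by
  obtain ⟨g, hgstep, hgn⟩ := seq_of_colorable hA hper hs h
  set φ : Sym 2 0 → Bool := fun x => Sum.rec (fun i => decide (i = (0 : Fin 2))) (fun p => p.1.elim0) x with hφ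
  have hflip : ∀ j, φ (g (j + 1)) = (Bool.xor true (φ (g j))) := by
    intro j
    have hne := hgstep j
    rw [signAct_eq_self_k0] at hne
    rcases h1 : g (j + 1) with i | p
    · rcases h0 : g j with i' | p'
      · rw [h1, h0] at hne
        have hii : i ≠ i' := fun hc => hne (by rw [hc])
        fin_cases i <;> fin_cases i' <;> simp_all [φ]
      · exact p'.1.elim0
    · exact p.1.elim0
  have hp := parity_seq (fun _ => true) (fun j => φ (g j)) hflip n
  have hpb : pb (fun _ => true) n = decide (Odd n) := by simp [pb]
  rw [hgn, hpb] at hp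
  by_contra hne
  rw [Nat.not_even_iff_odd] at hne
  simp [hne] at hp

private lemma fact_01_even
    (hA : ∀ j, G.Adj (f j) (f (j + 1))) (hper : ∀ k, f (k + n) = f k)
    (hs : ∀ j, σ s(f j, f (j + 1)) = s j)
    (h : SymColorable G σ 0 1) : Even ((List.range n).countP s) := by
  obtain ⟨g, hgstep, hgn⟩ := seq_of_colorable hA hper hs h
  have hex : ∀ j, ∃ b, g j = Sum.inr (⟨0, one_pos⟩, b) := by
    intro j
    rcases hj : g j with i | ⟨i, b⟩
    · exact i.elim0
    · exact ⟨b, by rw [Subsingleton.elim i ⟨0, one_pos⟩]⟩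
  choose β hform using hex
  have hstep' : ∀ j, β (j + 1) = ((s j).xor (β j)) := by
    intro j
    have hne := hgstep j
    rw [hform j, hform (j + 1), signAct_inr] at hne
    revert hne
    cases s j <;> cases hb0 : β j <;> cases hb1 : β (j + 1) <;> simp
  have hp := parity_seq s β hstep' n
  have h0 : β n = β 0 := by
    have h2 := hgn
    rw [hform n, hform 0] at h2
    injection h2 with h3
    exact congrArg Prod.snd h3
  rw [h0] at hp
  by_contra hodd
  rw [Nat.not_even_iff_odd] at hodd
  simp [pb, hodd] at hp

end Facts


private lemma sInf_eq_helper {S : Set ℕ} {v : ℕ} (hmem : v ∈ S) (hlb : ∀ b ∈ S, v ≤ b) :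
    sInf S = v :=
  le_antisymm (Nat.sInf_le hmem) (le_csInf ⟨v, hmem⟩ hlb)

section Bal

variable {V : Type*} {G : SimpleGraph V} {σ : Sym2 V → Bool} {n : ℕ} {f : ℕ → V} {s : ℕ → Bool}

private lemma fact_balanced
    (hn : 3 ≤ n) (hper : ∀ k, f (k + n) = f k)
    (hinj : ∀ a b, a < n → b < n → f a = f b → a = b)
    (hsurj : ∀ v, ∃ k, k < n ∧ f k = v)
    (hadjfull : ∀ a b, G.Adj (f a) (f b) ↔ ((a + 1) % n = b % n ∨ (b + 1) % n = a % n))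
    (hA : ∀ j, G.Adj (f j) (f (j + 1)))
    (hs : ∀ j, σ s(f j, f (j + 1)) = s j) :
    Balanced G σ ↔ Even ((List.range n).countP (fun j => !s j)) := by
  have hfn : f n = f 0 := by have := hper 0; rwa [Nat.zero_add] at this
  have hs' : σ s(f (n - 1), f 0) = s (n - 1) := by
    have := hs (n - 1)
    rwa [show n - 1 + 1 = n by omega, hfn] at this
  constructor
  · intro hb
    obtain ⟨w, hw, hwe⟩ := exists_ham_cycle G n hn f hA hfn hinj
    have hev := hb w hw
    unfold negCount at hev
    rw [← List.countP_eq_length_filter, hwe, List.countP_map] at hev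
    have hcomp : ((fun e => !σ e) ∘ fun j => s(f j, f (j + 1))) = fun j => !s j := by
      funext j
      simp [Function.comp, hs j]
    rwa [hcomp] at hev
  · intro hev
    set q : ℕ → Bool := fun j => !s j with hq
    have hpbn : pb q n = false := by
      simp [pb, Nat.not_odd_iff_even.mpr hev]
    have claim : ∀ a c, a < n → c < n → (a + 1) % n = c →
        (σ s(f a, f c) = false ↔ pb q a ≠ pb q c) := by
      intro a c ha hc h
      rcases Nat.lt_or_ge (a + 1) n with h' | h'
      · rw [Nat.mod_eq_of_lt h'] at h
        subst h
        rw [hs a, pb_step]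
        have : q a = !s a := rfl
        rw [this]
        cases hsa : s a <;> cases hpa : pb q a <;> simp
      · have ha1 : a = n - 1 := by omega
        have hc0 : c = 0 := by
          rw [ha1, show n - 1 + 1 = n by omega, Nat.mod_self] at h
          omega
        subst ha1
        subst hc0
        rw [hs', pb_zero]
        have h2 : ((q (n - 1)).xor (pb q (n - 1))) = false := by
          rw [← pb_step, show n - 1 + 1 = n by omega, hpbn]
        have : q (n - 1) = !s (n - 1) := rfl
        rw [this] at h2
        revert h2
        cases hsa : s (n - 1) <;> cases hpa : pb q (n - 1) <;> simp
    choose idx hidx1 hidx2 using hsurj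
    set b : V → Bool := fun v => pb q (idx v) with hbdef
    have hpot : ∀ ⦃x y : V⦄, G.Adj x y → (σ s(x, y) = false ↔ b x ≠ b y) := by
      intro x y hxy
      have hxy' : G.Adj (f (idx x)) (f (idx y)) := by rw [hidx2, hidx2]; exact hxy
      have hσ : σ s(x, y) = σ s(f (idx x), f (idx y)) := by rw [hidx2, hidx2]
      rcases (hadjfull (idx x) (idx y)).mp hxy' with h | h
      · rw [Nat.mod_eq_of_lt (hidx1 y)] at h
        rw [hσ]
        exact claim _ _ (hidx1 x) (hidx1 y) h
      · rw [Nat.mod_eq_of_lt (hidx1 x)] at h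
        rw [hσ, Sym2.eq_swap]
        have := claim _ _ (hidx1 y) (hidx1 x) h
        rw [this]
        exact ne_comm
    intro u w hcyc
    unfold negCount
    rw [← List.countP_eq_length_filter]
    rcases Nat.even_or_odd (w.edges.countP (fun e => !σ e)) with h | h
    · exact h
    · exact absurd rfl ((parity_along_walk σ b hpot w).mp h)

end Bal


/-- Brooks' type theorem for circuits.
For a circuit `C_n` on `n` vertices with signature `σ` and `t ≤ χ(C_n)`:
if `t ∈ {1,3}` then `χ^t_sym(C_n,σ) = 3`; if `t ∈ {0,2}` then
`χ^t_sym(C_n,σ) ∈ {2,4}`, and it equals 4 iff `(C_n,σ)` is a balanced odd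
circuit, an unbalanced even circuit with `t = 0`, or an unbalanced odd circuit
with `t = 2`. -/
theorem stmt8 {V : Type*} [Fintype V] (G : SimpleGraph V) [DecidableRel G.Adj]
    (hG : IsCircuit G) (σ : Sym2 V → Bool) (t : ℕ) (ht : t ≤ chrom G) :
    ((t = 1 ∨ t = 3) → symChromT G σ t = 3) ∧
    ((t = 0 ∨ t = 2) →
      (symChromT G σ t = 2 ∨ symChromT G σ t = 4) ∧
      (symChromT G σ t = 4 ↔
        (Odd (Fintype.card V) ∧ Balanced G σ) ∨
        (Even (Fintype.card V) ∧ ¬ Balanced G σ ∧ t = 0) ∨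
        (Odd (Fintype.card V) ∧ ¬ Balanced G σ ∧ t = 2))) := by
  classical
  obtain ⟨hn, f, hper, hinj, hsurj, hadjfull⟩ := cycle_structure G hG.1 hG.2
  set n := Fintype.card V with hncard
  set s : ℕ → Bool := fun j => σ s(f j, f (j + 1)) with hsdef
  have hs : ∀ j, σ s(f j, f (j + 1)) = s j := fun j => rfl
  have hA : ∀ j, G.Adj (f j) (f (j + 1)) := by
    intro j
    rw [hadjfull]
    left
    rfl
  have hadj : ∀ a b, a < n → b < n → G.Adj (f a) (f b) →
      ((a + 1) % n = b ∨ (b + 1) % n = a) := by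
    intro a b ha hb h
    rcases (hadjfull a b).mp h with h' | h'
    · left; rwa [Nat.mod_eq_of_lt hb] at h'
    · right; rwa [Nat.mod_eq_of_lt ha] at h'
  set Np := (List.range n).countP s with hNp
  set Nm := (List.range n).countP (fun j => !s j) with hNm
  have hsum : Np + Nm = n := by
    have hh := (List.range n).length_eq_countP_add_countP s
    rw [List.length_range] at hh
    simp only [decide_not, Bool.decide_eq_true] at hh
    omega
  have hbal : Balanced G σ ↔ Even Nm := fact_balanced hn hper hinj hsurj hadjfull hA hs
  have hc30 : SymColorable G σ 3 0 := fact_col30 hn hper hsurj hadj hs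
  have hc11 : SymColorable G σ 1 1 := fact_col_t1 one_pos hn hper hsurj hadj hs
  have hc21 : SymColorable G σ 2 1 := fact_col_t1 two_pos hn hper hsurj hadj hs
  have hc02 : SymColorable G σ 0 2 := fact_col02 hn hper hsurj hadj hs
  have h20 : SymColorable G σ 2 0 ↔ Even n :=
    ⟨fact_20_even hA hper hs, fun hE => fact_col20 hE hn hper hsurj hadj hs⟩
  have h01 : SymColorable G σ 0 1 ↔ Even Np :=
    ⟨fact_01_even hA hper hs, fun hE => fact_col01 hE hn hper hsurj hadj hs⟩
  have hn10 : ¬ SymColorable G σ 1 0 := fact_not10 hA hper hs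
  have hn00 : ¬ SymColorable G σ 0 0 := fact_not00 (f 0)
  have hchi3 : symChromT G σ 3 = 3 := by
    unfold symChromT
    apply sInf_eq_helper
    · exact ⟨0, by norm_num, hc30⟩
    · rintro b ⟨k, rfl, -⟩
      omega
  have hchi1 : symChromT G σ 1 = 3 := by
    unfold symChromT
    apply sInf_eq_helper
    · exact ⟨1, by norm_num, hc11⟩
    · rintro b ⟨k, rfl, hcol⟩
      cases k with
      | zero => exact absurd hcol hn10
      | succ k => omega
  have hchi2 : symChromT G σ 2 = if Even n then 2 else 4 := by
    unfold symChromT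
    by_cases hE : Even n
    · rw [if_pos hE]
      apply sInf_eq_helper
      · exact ⟨0, by norm_num, h20.mpr hE⟩
      · rintro b ⟨k, rfl, -⟩
        omega
    · rw [if_neg hE]
      apply sInf_eq_helper
      · exact ⟨1, by norm_num, hc21⟩
      · rintro b ⟨k, rfl, hcol⟩
        cases k with
        | zero => exact absurd (h20.mp hcol) hE
        | succ k => omega
  have hchi0 : symChromT G σ 0 = if Even Np then 2 else 4 := by
    unfold symChromT
    by_cases hE : Even Np
    · rw [if_pos hE]
      apply sInf_eq_helper
      · exact ⟨1, by norm_num, h01.mpr hE⟩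
      · rintro b ⟨k, rfl, hcol⟩
        cases k with
        | zero => exact absurd hcol hn00
        | succ k => omega
    · rw [if_neg hE]
      apply sInf_eq_helper
      · exact ⟨2, by norm_num, hc02⟩
      · rintro b ⟨k, rfl, hcol⟩
        cases k with
        | zero => exact absurd hcol hn00
        | succ k =>
          cases k with
          | zero => exact absurd (h01.mp hcol) hE
          | succ k => omega
  constructor
  · rintro (rfl | rfl)
    · exact hchi1
    · exact hchi3
  · rintro (rfl | rfl)
    · -- t = 0
      refine ⟨?_, ?_⟩
      · rw [hchi0]
        by_cases hE : Even Np
        · rw [if_pos hE]; left; rfl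
        · rw [if_neg hE]; right; rfl
      · rw [hchi0, hbal]
        by_cases hE : Even Np
        · rw [if_pos hE]
          rw [Nat.even_iff] at hE
          constructor
          · intro h
            exact absurd h (by norm_num)
          · rintro (⟨h1, h2⟩ | ⟨h1, h2, -⟩ | ⟨h1, h2, h3⟩)
            · rw [Nat.odd_iff] at h1
              rw [Nat.even_iff] at h2
              omega
            · rw [Nat.even_iff] at h1
              rw [Nat.not_even_iff_odd, Nat.odd_iff] at h2
              omega
            · exact absurd h3 (by norm_num)
        · rw [if_neg hE]
          rw [Nat.not_even_iff_odd, Nat.odd_iff] at hE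
          constructor
          · intro _
            rcases Nat.even_or_odd n with hn' | hn'
            · right; left
              refine ⟨hn', ?_, rfl⟩
              rw [Nat.even_iff] at hn'
              rw [Nat.not_even_iff_odd, Nat.odd_iff]
              omega
            · left
              refine ⟨hn', ?_⟩
              rw [Nat.odd_iff] at hn'
              rw [Nat.even_iff]
              omega
          · intro _
            rfl
    · -- t = 2
      refine ⟨?_, ?_⟩
      · rw [hchi2]
        by_cases hE : Even n
        · rw [if_pos hE]; left; rfl
        · rw [if_neg hE]; right; rfl
      · rw [hchi2, hbal]
        by_cases hE : Even n
        · rw [if_pos hE]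
          constructor
          · intro h
            exact absurd h (by norm_num)
          · rintro (⟨h1, -⟩ | ⟨-, -, h3⟩ | ⟨h1, -, -⟩)
            · rw [Nat.odd_iff] at h1
              rw [Nat.even_iff] at hE
              omega
            · exact absurd h3 (by norm_num)
            · rw [Nat.odd_iff] at h1
              rw [Nat.even_iff] at hE
              omega
        · rw [if_neg hE]
          rw [Nat.not_even_iff_odd] at hE
          constructor
          · intro _
            rcases Nat.even_or_odd Nm with hm | hm
            · exact Or.inl ⟨hE, hm⟩
            · exact Or.inr (Or.inr ⟨hE, by rw [Nat.not_even_iff_odd]; exact hm, rfl⟩)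
          · intro _
            rfl


end SymSet
end

section
/- Let (G,σ) be a signed graph with χ^t_sym(G,σ) = t + 2k. Then for each i ∈ {1,…,k}, (G,σ) contains a subgraph (H, σ|_H) with χ^t_sym(H, σ|_H) = t + 2i that is critical, i.e. χ^t_sym(H − v, σ|_{H−v}) < t + 2i for every vertex v of H. -/
namespace SymSet

section Aux

variable {V : Type*}

lemma symColorable_card {W : Type*} [Finite W] (G : SimpleGraph W) (σ : Sym2 W → Bool) (t : ℕ) :
    SymColorable G σ t (Nat.card W) := by
  let e := Finite.equivFin W
  refine ⟨fun w => .inr (e w, true), ?_⟩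
  intro v w hvw hc
  have hne : v ≠ w := G.ne_of_adj hvw
  cases hσ : σ s(v, w) <;> rw [hσ] at hc <;> simp [signAct, symNeg] at hc <;>
    exact hne hc

lemma symChromT_spec {W : Type*} [Finite W] (G : SimpleGraph W) (σ : Sym2 W → Bool) (t : ℕ) :
    ∃ m, symChromT G σ t = t + 2 * m ∧ SymColorable G σ t m := by
  have hne : {n | ∃ k, n = t + 2 * k ∧ SymColorable G σ t k}.Nonempty :=
    ⟨t + 2 * Nat.card W, Nat.card W, rfl, symColorable_card G σ t⟩
  exact Nat.sInf_mem hne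

lemma symChromT_le {W : Type*} (G : SimpleGraph W) (σ : Sym2 W → Bool) {t m : ℕ}
    (h : SymColorable G σ t m) : symChromT G σ t ≤ t + 2 * m :=
  Nat.sInf_le ⟨m, rfl, h⟩

lemma symColorable_of_top (G : SimpleGraph V) (σ : Sym2 V → Bool) {t m : ℕ}
    (h : SymColorable (⊤ : G.Subgraph).coe (restrict σ (⊤ : G.Subgraph).verts) t m) :
    SymColorable G σ t m := by
  obtain ⟨c, hc⟩ := h
  refine ⟨fun v => c ⟨v, trivial⟩, ?_⟩
  intro v w hvw
  have hadj : (⊤ : G.Subgraph).coe.Adj ⟨v, trivial⟩ ⟨w, trivial⟩ := by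
    simp [hvw]
  have := hc hadj
  simpa [restrict] using this

/-- Embedding `S_{2m}^t ↪ S_{2(m+1)}^t`. -/
def emb {t m : ℕ} : Sym t m → Sym t (m + 1)
  | .inl i => .inl i
  | .inr (j, b) => .inr (j.castSucc, b)

lemma emb_injective {t m : ℕ} : Function.Injective (emb : Sym t m → Sym t (m + 1)) := by
  rintro (i | ⟨j, b⟩) (i' | ⟨j', b'⟩) h
  · simpa [emb] using h
  · simp [emb] at h
  · simp [emb] at h
  · simp only [emb, Sum.inr.injEq, Prod.mk.injEq] at h
    rw [Fin.castSucc_injective _ h.1, h.2]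

lemma emb_signAct {t m : ℕ} (s : Bool) (x : Sym t m) :
    emb (signAct s x) = signAct s (emb x) := by
  cases s <;> rcases x with i | ⟨j, b⟩ <;> rfl

lemma emb_ne_last {t m : ℕ} (x : Sym t m) (b : Bool) :
    emb x ≠ (.inr (Fin.last m, b) : Sym t (m + 1)) := by
  rcases x with i | ⟨j, b'⟩ <;> simp only [emb, ne_eq, Sum.inr.injEq, Prod.mk.injEq]
  · simp
  · intro h
    exact absurd h.1 (Fin.castSucc_lt_last j).ne

lemma signAct_inr_last {t m : ℕ} (s : Bool) (b : Bool) :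
    ∃ b', signAct s (.inr (Fin.last m, b) : Sym t (m + 1)) = .inr (Fin.last m, b') := by
  cases s
  · exact ⟨!b, rfl⟩
  · exact ⟨b, rfl⟩

lemma symColorable_extend (G : SimpleGraph V) (σ : Sym2 V → Bool) (H : G.Subgraph)
    {v : V} (hv : v ∈ H.verts) {t m : ℕ}
    (h : SymColorable (H.deleteVerts {v}).coe (restrict σ (H.deleteVerts {v}).verts) t m) :
    SymColorable H.coe (restrict σ H.verts) t (m + 1) := by
  classical
  obtain ⟨c, hc⟩ := h
  refine ⟨fun w =>
    if hw : w.val = v then .inr (Fin.last m, true)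
    else emb (c ⟨w.val, ⟨w.2, hw⟩⟩), ?_⟩
  intro u w hadj hc'
  dsimp only at hc'
  have huw : (u : V) ≠ (w : V) := fun h' => H.coe.ne_of_adj hadj (Subtype.ext h')
  have hAdjH : H.Adj u.val w.val := hadj
  by_cases hu : u.val = v
  · have hwv : w.val ≠ v := fun h' => huw (hu.trans h'.symm)
    rw [dif_pos hu, dif_neg hwv] at hc'
    rw [← emb_signAct] at hc'
    exact emb_ne_last _ _ hc'.symm
  · by_cases hw : w.val = v
    · rw [dif_neg hu, dif_pos hw] at hc'
      obtain ⟨b', hb'⟩ := signAct_inr_last (t := t) (m := m) (restrict σ H.verts s(↑u, ↑w)) true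
      rw [hb'] at hc'
      exact emb_ne_last _ _ hc'
    · rw [dif_neg hu, dif_neg hw, ← emb_signAct] at hc'
      set u' : ↥(H.deleteVerts {v}).verts := ⟨u.val, ⟨u.2, hu⟩⟩
      set w' : ↥(H.deleteVerts {v}).verts := ⟨w.val, ⟨w.2, hw⟩⟩
      have hadj' : (H.deleteVerts {v}).coe.Adj u' w' := by
        simp only [SimpleGraph.Subgraph.coe_adj, SimpleGraph.Subgraph.deleteVerts_adj]
        exact ⟨u.2, hu, w.2, hw, hAdjH⟩
      have hσeq : restrict σ (H.deleteVerts {v}).verts s(u', w') =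
          restrict σ H.verts s(↑u, ↑w) := by
        simp [restrict]
        rfl
      exact hc hadj' (by rw [hσeq]; exact emb_injective hc')

lemma symColorable_empty (G : SimpleGraph V) (σ : Sym2 V → Bool) (H : G.Subgraph)
    (h : H.verts = ∅) (t : ℕ) :
    SymColorable H.coe (restrict σ H.verts) t 0 := by
  refine ⟨fun w => absurd w.2 (by simp [h]), fun u w h' => absurd u.2 (by simp [h])⟩

end Aux

/-- if `χ^t_sym(G,σ) = t + 2k`, then for each
`i ∈ {1, …, k}`, `(G,σ)` contains a subgraph `(H, σ|_H)` with
`χ^t_sym(H, σ|_H) = t + 2i` which is critical: deleting any vertex of `H`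
strictly decreases its symset `t`-chromatic number. -/
theorem stmt13 {V : Type*} [Fintype V] (G : SimpleGraph V) (σ : Sym2 V → Bool)
    (t k : ℕ) (ht : t ≤ chrom G) (h : symChromT G σ t = t + 2 * k)
    (i : ℕ) (hi1 : 1 ≤ i) (hik : i ≤ k) :
    ∃ H : G.Subgraph,
      symChromT H.coe (restrict σ H.verts) t = t + 2 * i ∧
      ∀ v ∈ H.verts,
        symChromT (H.deleteVerts {v}).coe (restrict σ (H.deleteVerts {v}).verts) t
          < t + 2 * i := by
  classical
  -- the set of cardinalities of vertex sets of subgraphs with χ^t ≥ t + 2i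
  set P : ℕ → Prop := fun n => ∃ H : G.Subgraph,
    H.verts.ncard = n ∧ t + 2 * i ≤ symChromT H.coe (restrict σ H.verts) t with hP
  -- `⊤` witnesses nonemptiness
  have htop : t + 2 * i ≤ symChromT (⊤ : G.Subgraph).coe
      (restrict σ (⊤ : G.Subgraph).verts) t := by
    obtain ⟨m, hm, hcol⟩ := symChromT_spec (⊤ : G.Subgraph).coe
      (restrict σ (⊤ : G.Subgraph).verts) t
    have : symChromT G σ t ≤ t + 2 * m := symChromT_le G σ (symColorable_of_top G σ hcol)
    rw [h] at this
    have hk : k ≤ m := by omega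
    omega
  have hPne : {n | P n}.Nonempty := ⟨(⊤ : G.Subgraph).verts.ncard, ⟨⊤, rfl, htop⟩⟩
  obtain ⟨H, hcard, hge⟩ := Nat.sInf_mem hPne
  have hmin : ∀ n < sInf {n | P n}, ¬ P n := fun n hn => Nat.notMem_of_lt_sInf hn
  -- criticality: deleting any vertex drops below t + 2i
  have hcrit : ∀ v ∈ H.verts,
      symChromT (H.deleteVerts {v}).coe (restrict σ (H.deleteVerts {v}).verts) t
        < t + 2 * i := by
    intro v hv
    by_contra hle
    push_neg at hle
    have hlt : (H.deleteVerts {v}).verts.ncard < sInf {n | P n} := by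
      rw [← hcard, SimpleGraph.Subgraph.deleteVerts_verts]
      exact Set.ncard_diff_singleton_lt_of_mem hv (Set.toFinite _)
    exact hmin _ hlt ⟨H.deleteVerts {v}, rfl, hle⟩
  refine ⟨H, ?_, hcrit⟩
  -- H.verts is nonempty
  have hne : H.verts.Nonempty := by
    rcases Set.eq_empty_or_nonempty H.verts with he | hne
    · exfalso
      have := symChromT_le H.coe (restrict σ H.verts) (symColorable_empty G σ H he t)
      omega
    · exact hne
  obtain ⟨v, hv⟩ := hne
  -- χ(H) ≤ χ(H - v) + 2 ≤ t + 2i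
  obtain ⟨m, hm, hcol⟩ := symChromT_spec (H.deleteVerts {v}).coe
    (restrict σ (H.deleteVerts {v}).verts) t
  have hlt := hcrit v hv
  rw [hm] at hlt
  have hmi : m + 1 ≤ i := by omega
  have hext := symColorable_extend G σ H hv hcol
  have hub := symChromT_le H.coe (restrict σ H.verts) hext
  omega

end SymSet
end
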